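/- arXiv:1904.02692 — 2 statements merged into one kernel-verified Lean document; each statement's English description precedes it below -/
import Mathlib

section
/- Let k ≥ 2 be an integer and let n_A, n_B be positive integers. Let V_AB be a real symmetric (2n_A+2n_B)×(2n_A+2n_B) matrix satisfying V_AB ≥ iΩ_{n_A+n_B}. Suppose there exists a real symmetric 2n_B×2n_B matrix Δ with Δ ≥ iΩ_{n_B} such that the complex Hermitian matrix V_AB − (iΩ_{n_A} ⊕ ((1−1/k)·Δ + (i/k)·Ω_{n_B})) is positive semidefinite. Then the complex Hermitian matrix ((k+1)/(k−1))·V_AB − (iΩ_{n_A} ⊕ Δ) is positive semidefinite. (Consequently, the Gaussian state with QCM ((k+1)/(k−1))·V_AB is separable.) -/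
open Matrix Complex ComplexOrder

/-- The standard symplectic form on `n` modes: block-diagonal with `n` blocks `[[0,1],[-1,0]]`. -/
noncomputable def OmegaM (n : ℕ) : Matrix (Fin (2*n)) (Fin (2*n)) ℝ :=
  Matrix.of fun i j =>
    if i.val + 1 = j.val ∧ i.val % 2 = 0 then (1 : ℝ)
    else if j.val + 1 = i.val ∧ j.val % 2 = 0 then -1 else 0

/-- Complexification of a real matrix. -/
noncomputable def cplx {m p : Type*} (M : Matrix m p ℝ) : Matrix m p ℂ :=
  M.map (fun x => (x : ℂ))

lemma cplx_apply {m p : Type*} (M : Matrix m p ℝ) (i : m) (j : p) :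
    cplx M i j = (M i j : ℂ) := rfl

lemma cplx_neg {m p : Type*} (M : Matrix m p ℝ) : cplx (-M) = -(cplx M) := by
  ext i j; simp [cplx_apply, cplx]

lemma cplx_transpose {m p : Type*} (M : Matrix m p ℝ) : cplx (Mᵀ) = (cplx M)ᵀ := by
  ext i j; rfl

lemma OmegaM_transpose (n : ℕ) : (OmegaM n)ᵀ = -(OmegaM n) := by
  ext i j
  simp only [Matrix.transpose_apply, Matrix.neg_apply, OmegaM, Matrix.of_apply]
  split_ifs <;> first | (exfalso; omega) | norm_num

lemma psd_smul {n : Type*} [Fintype n] {M : Matrix n n ℂ} (hM : M.PosSemidef)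
    {a : ℝ} (ha : 0 ≤ a) : ((a:ℂ) • M).PosSemidef := by
  rw [posSemidef_iff_dotProduct_mulVec]
  constructor
  · simp [Matrix.IsHermitian, conjTranspose_smul, hM.1.eq]
  · intro x
    rw [smul_mulVec, dotProduct_smul]
    exact mul_nonneg (by exact_mod_cast ha) (hM.dotProduct_mulVec_nonneg x)

/-- If the QCM `V_AB` of a state satisfies the `k`-extendibility SDP criterion with
witness `Δ`, then `((k+1)/(k−1))·V_AB ≥ iΩ_A ⊕ Δ`; consequently the Gaussian state
with QCM `((k+1)/(k−1))·V_AB` is separable. -/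
theorem k_ext_implies_rescaled_separable
    (k nA nB : ℕ) (hk : 2 ≤ k) (hnA : 0 < nA) (hnB : 0 < nB)
    (V : Matrix (Fin (2*nA) ⊕ Fin (2*nB)) (Fin (2*nA) ⊕ Fin (2*nB)) ℝ)
    (hV : V.IsSymm)
    (hbona : (cplx V -
      Complex.I • cplx (Matrix.fromBlocks (OmegaM nA) 0 0 (OmegaM nB))).PosSemidef)
    (Δ : Matrix (Fin (2*nB)) (Fin (2*nB)) ℝ) (hΔ : Δ.IsSymm)
    (hΔbona : (cplx Δ - Complex.I • cplx (OmegaM nB)).PosSemidef)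
    (h : (cplx V -
      Matrix.fromBlocks (Complex.I • cplx (OmegaM nA)) 0 0
        ((1 - 1/(k:ℂ)) • cplx Δ
          + (Complex.I/(k:ℂ)) • cplx (OmegaM nB))).PosSemidef) :
    (cplx ((((k:ℝ)+1)/((k:ℝ)-1)) • V) -
      Matrix.fromBlocks (Complex.I • cplx (OmegaM nA)) 0 0 (cplx Δ)).PosSemidef := by
  have hkR : (0:ℝ) < (k:ℝ) - 1 := by
    have : (2:ℝ) ≤ (k:ℝ) := by exact_mod_cast hk
    linarith
  have hα : (0:ℝ) ≤ (k:ℝ)/((k:ℝ)-1) := div_nonneg (by linarith) hkR.le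
  have hβ : (0:ℝ) ≤ 1/((k:ℝ)-1) := by positivity
  have hkC : ((k:ℂ)) ≠ 0 := by
    have : (k:ℝ) ≠ 0 := by linarith
    exact_mod_cast (by exact_mod_cast this : ((k:ℝ) : ℂ) ≠ 0)
  have hk1C : ((k:ℂ)) - 1 ≠ 0 := by
    intro hcon
    have : ((k:ℂ)) = 1 := by linear_combination hcon
    have : (k:ℝ) = 1 := by exact_mod_cast this
    linarith
  -- transpose of the hbona matrix
  have hT : (cplx V -
      Complex.I • cplx (Matrix.fromBlocks (OmegaM nA) 0 0 (OmegaM nB)))ᵀ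
      = cplx V + Complex.I • cplx (Matrix.fromBlocks (OmegaM nA) 0 0 (OmegaM nB)) := by
    rw [Matrix.transpose_sub, Matrix.transpose_smul, ← cplx_transpose, ← cplx_transpose,
      hV.eq, Matrix.fromBlocks_transpose, Matrix.transpose_zero, Matrix.transpose_zero,
      OmegaM_transpose, OmegaM_transpose]
    have : Matrix.fromBlocks (-(OmegaM nA)) (0 : Matrix (Fin (2*nA)) (Fin (2*nB)) ℝ)
        (0 : Matrix (Fin (2*nB)) (Fin (2*nA)) ℝ) (-(OmegaM nB))
        = -(Matrix.fromBlocks (OmegaM nA) 0 0 (OmegaM nB)) := by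
      ext i j; rcases i with i | i <;> rcases j with j | j <;> simp
    rw [this, cplx_neg, smul_neg, sub_neg_eq_add]
  have key : (cplx ((((k:ℝ)+1)/((k:ℝ)-1)) • V) -
      Matrix.fromBlocks (Complex.I • cplx (OmegaM nA)) 0 0 (cplx Δ)) =
      (((k:ℝ)/((k:ℝ)-1) : ℝ) : ℂ) • (cplx V -
      Matrix.fromBlocks (Complex.I • cplx (OmegaM nA)) 0 0
        ((1 - 1/(k:ℂ)) • cplx Δ
          + (Complex.I/(k:ℂ)) • cplx (OmegaM nB)))
      + (((1/((k:ℝ)-1)) : ℝ) : ℂ) • (cplx V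
      + Complex.I • cplx (Matrix.fromBlocks (OmegaM nA) 0 0 (OmegaM nB))) := by
    ext i j
    rcases i with i | i <;> rcases j with j | j <;>
      simp only [cplx_apply, Matrix.sub_apply, Matrix.add_apply, Matrix.smul_apply,
        Matrix.fromBlocks_apply₁₁, Matrix.fromBlocks_apply₁₂, Matrix.fromBlocks_apply₂₁,
        Matrix.fromBlocks_apply₂₂, Matrix.zero_apply, smul_eq_mul] <;>
      push_cast <;> field_simp <;> ring
  have hb2 := hbona.transpose
  rw [hT] at hb2
  rw [key]
  exact (psd_smul h hα).add (psd_smul hb2 hβ)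
end

section
/- Let n_A, n_B be positive integers and let V_AB be a real symmetric (2n_A+2n_B)×(2n_A+2n_B) matrix with V_AB ≥ iΩ_{n_A+n_B}. Suppose that for every integer k ≥ 2 there exists a real symmetric 2n_B×2n_B matrix Δ_k with Δ_k ≥ iΩ_{n_B} such that the complex Hermitian matrix V_AB − (iΩ_{n_A} ⊕ ((1−1/k)·Δ_k + (i/k)·Ω_{n_B})) is positive semidefinite. Then there exists a real symmetric 2n_B×2n_B matrix Δ with Δ ≥ iΩ_{n_B} such that the complex Hermitian matrix V_AB − (iΩ_{n_A} ⊕ Δ) is positive semidefinite. -/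
open Matrix Complex ComplexOrder Filter Topology

lemma OmegaM_diag (n : ℕ) (i : Fin (2*n)) : OmegaM n i i = 0 := by
  simp only [OmegaM, Matrix.of_apply]
  rw [if_neg, if_neg] <;> omega

lemma OmegaM_skew (n : ℕ) (i j : Fin (2*n)) : OmegaM n j i = - OmegaM n i j := by
  simp only [OmegaM, Matrix.of_apply]
  split_ifs <;> first | omega | ring

lemma star_single {m : Type*} [DecidableEq m] (i : m) (c : ℂ) :
    star (Pi.single i c : m → ℂ) = Pi.single i (starRingEnd ℂ c) := by
  ext x; by_cases h : x = i <;> simp [Pi.single_apply, h]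

lemma quad_base {m : Type*} [Fintype m] [DecidableEq m] (M : Matrix m m ℂ) (i j : m)
    (c d : ℂ) :
    star (Pi.single i c : m → ℂ) ⬝ᵥ M *ᵥ (Pi.single j d) = starRingEnd ℂ c * (M i j * d) := by
  rw [star_single, Matrix.mulVec_single, single_dotProduct]
  simp

lemma quad_pair {m : Type*} [Fintype m] [DecidableEq m] (M : Matrix m m ℂ) (i j : m)
    (c : ℂ) :
    star (Pi.single i 1 + Pi.single j c : m → ℂ) ⬝ᵥ M *ᵥ (Pi.single i 1 + Pi.single j c) =
      M i i + starRingEnd ℂ c * M j i + M i j * c + starRingEnd ℂ c * M j j * c := by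
  rw [star_add, Matrix.mulVec_add, dotProduct_add, add_dotProduct, add_dotProduct,
    quad_base, quad_base, quad_base, quad_base]
  simp; ring

lemma quad_single {m : Type*} [Fintype m] [DecidableEq m] (M : Matrix m m ℂ) (i : m) :
    star (Pi.single i 1 : m → ℂ) ⬝ᵥ M *ᵥ (Pi.single i 1) = M i i := by
  rw [quad_base]; simp

lemma psd_limit {m : Type*} [Fintype m] [DecidableEq m] (M : ℕ → Matrix m m ℂ)
    (L : Matrix m m ℂ) (hM : ∀ k, (M k).PosSemidef)
    (hlim : ∀ i j, Tendsto (fun k => M k i j) atTop (𝓝 (L i j))) : L.PosSemidef := by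
  refine Matrix.posSemidef_iff_dotProduct_mulVec.mpr ⟨?_, ?_⟩
  · ext i j
    have h1 : Tendsto (fun k => (M k) i j) atTop (𝓝 (L i j)) := hlim i j
    have h2 : Tendsto (fun k => star ((M k) j i)) atTop
        (𝓝 (star (L j i))) := (continuous_star.tendsto _).comp (hlim j i)
    have he : ∀ k, star ((M k) j i) = (M k) i j := fun k => (hM k).1.apply i j
    simp only [he] at h2
    simpa [Matrix.conjTranspose_apply] using (tendsto_nhds_unique h2 h1)
  · intro x
    have hq : ∀ (N : Matrix m m ℂ), star x ⬝ᵥ N *ᵥ x = ∑ i, ∑ j, star (x i) * (N i j * x j) := by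
      intro N
      simp [dotProduct, Matrix.mulVec, Finset.mul_sum]
    have hT : Tendsto (fun k => star x ⬝ᵥ (M k) *ᵥ x) atTop (𝓝 (star x ⬝ᵥ L *ᵥ x)) := by
      simp only [hq]
      exact tendsto_finset_sum _ fun i _ => tendsto_finset_sum _ fun j _ =>
        (tendsto_const_nhds.mul ((hlim i j).mul tendsto_const_nhds))
    have hpos : ∀ k, 0 ≤ star x ⬝ᵥ (M k) *ᵥ x := fun k => (hM k).dotProduct_mulVec_nonneg x
    simp only [Complex.le_def] at hpos
    refine Complex.le_def.mpr ⟨?_, ?_⟩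
    · exact ge_of_tendsto' ((Complex.continuous_re.tendsto _).comp hT)
        (fun k => by simpa using (hpos k).1)
    · have h0 : Tendsto (Complex.im ∘ fun k => star x ⬝ᵥ (M k) *ᵥ x) atTop (𝓝 (0:ℝ)) := by
        have : (Complex.im ∘ fun k => star x ⬝ᵥ (M k) *ᵥ x) = fun _ => (0:ℝ) := by
          funext k; exact ((hpos k).2).symm
        rw [this]; exact tendsto_const_nhds
      have := tendsto_nhds_unique ((Complex.continuous_im.tendsto _).comp hT) h0
      simpa using this.symm

lemma cplx_sub_smul_entry {m : Type*} (A B : Matrix m m ℝ) (i j : m) :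
    (cplx A - Complex.I • cplx B) i j = (A i j : ℂ) - Complex.I * (B i j : ℂ) := by
  simp [cplx, Matrix.sub_apply, Matrix.smul_apply, Matrix.map_apply, smul_eq_mul]

/-- If the `k`-extendibility SDP criterion holds for every `k ≥ 2`, then the Gaussian
separability criterion holds: there is a real symmetric `Δ ≥ iΩ_B` with
`V_AB ≥ iΩ_A ⊕ Δ`. -/
theorem all_k_ext_implies_separable
    (nA nB : ℕ) (hnA : 0 < nA) (hnB : 0 < nB)
    (V : Matrix (Fin (2*nA) ⊕ Fin (2*nB)) (Fin (2*nA) ⊕ Fin (2*nB)) ℝ)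
    (hV : V.IsSymm)
    (hbona : (cplx V -
      Complex.I • cplx (Matrix.fromBlocks (OmegaM nA) 0 0 (OmegaM nB))).PosSemidef)
    (h : ∀ k : ℕ, 2 ≤ k →
      ∃ Δk : Matrix (Fin (2*nB)) (Fin (2*nB)) ℝ, Δk.IsSymm ∧
        (cplx Δk - Complex.I • cplx (OmegaM nB)).PosSemidef ∧
        (cplx V -
          Matrix.fromBlocks (Complex.I • cplx (OmegaM nA)) 0 0
            ((1 - 1/(k:ℂ)) • cplx Δk
              + (Complex.I/(k:ℂ)) • cplx (OmegaM nB))).PosSemidef) :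
    ∃ Δ : Matrix (Fin (2*nB)) (Fin (2*nB)) ℝ, Δ.IsSymm ∧
      (cplx Δ - Complex.I • cplx (OmegaM nB)).PosSemidef ∧
      (cplx V -
        Matrix.fromBlocks (Complex.I • cplx (OmegaM nA)) 0 0 (cplx Δ)).PosSemidef := by
  classical
  have hsel : ∀ k : ℕ, ∃ Δk : Matrix (Fin (2*nB)) (Fin (2*nB)) ℝ, Δk.IsSymm ∧
      (cplx Δk - Complex.I • cplx (OmegaM nB)).PosSemidef ∧
      (cplx V -
        Matrix.fromBlocks (Complex.I • cplx (OmegaM nA)) 0 0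
          ((1 - 1/(((k+2:ℕ)):ℂ)) • cplx Δk
            + (Complex.I/(((k+2:ℕ)):ℂ)) • cplx (OmegaM nB))).PosSemidef :=
    fun k => h (k+2) (by omega)
  choose D hDsymm hDpsd hDext using hsel
  haveI : Nonempty (Fin (2*nB)) := ⟨⟨0, by omega⟩⟩
  set B : ℝ := Finset.univ.sup' Finset.univ_nonempty
    (fun i : Fin (2*nB) => V (Sum.inr i) (Sum.inr i)) with hBdef
  -- diagonal entries are nonnegative
  have hdiag0 : ∀ k i, 0 ≤ D k i i := by
    intro k i
    have hq := (hDpsd k).dotProduct_mulVec_nonneg (Pi.single i 1)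
    rw [quad_single, cplx_sub_smul_entry, OmegaM_diag] at hq
    rw [show ((D k i i : ℂ) - Complex.I * ((0:ℝ):ℂ)) = ((D k i i : ℝ):ℂ) by push_cast; ring] at hq
    exact Complex.zero_le_real.mp hq
  -- general quadratic inequality for the D's
  have hquad : ∀ (k : ℕ) (i j : Fin (2*nB)) (c : ℝ),
      0 ≤ D k i i + 2*c*(D k i j) + c^2 * D k j j := by
    intro k i j c
    have hq := (hDpsd k).dotProduct_mulVec_nonneg (Pi.single i 1 + Pi.single j (c:ℂ))
    rw [quad_pair, cplx_sub_smul_entry, cplx_sub_smul_entry, cplx_sub_smul_entry,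
      cplx_sub_smul_entry, OmegaM_diag, OmegaM_diag, OmegaM_skew nB i j,
      (hDsymm k).apply i j] at hq
    rw [show ((D k i i : ℂ) - Complex.I * ((0:ℝ):ℂ)
        + starRingEnd ℂ (c:ℂ) * ((D k i j : ℂ) - Complex.I * ((-(OmegaM nB i j) : ℝ):ℂ))
        + ((D k i j : ℂ) - Complex.I * ((OmegaM nB i j : ℝ):ℂ)) * (c:ℂ)
        + starRingEnd ℂ (c:ℂ) * ((D k j j : ℂ) - Complex.I * ((0:ℝ):ℂ)) * (c:ℂ))
        = ((D k i i + 2*c*(D k i j) + c^2 * D k j j : ℝ) : ℂ) by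
      rw [Complex.conj_ofReal]; push_cast; ring] at hq
    exact Complex.zero_le_real.mp hq
  -- diagonal entries are bounded above
  have hdiagB : ∀ k i, D k i i ≤ 2 * B := by
    intro k i
    have hq := (hDext k).dotProduct_mulVec_nonneg (Pi.single (Sum.inr i) 1)
    rw [quad_single] at hq
    have hE : (cplx V -
        Matrix.fromBlocks (Complex.I • cplx (OmegaM nA)) 0 0
          ((1 - 1/(((k+2:ℕ)):ℂ)) • cplx (D k)
            + (Complex.I/(((k+2:ℕ)):ℂ)) • cplx (OmegaM nB))) (Sum.inr i) (Sum.inr i)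
        = (V (Sum.inr i) (Sum.inr i) : ℂ) - (1 - 1/(((k+2:ℕ)):ℂ)) * (D k i i : ℂ) := by
      simp [cplx, Matrix.sub_apply, Matrix.fromBlocks_apply₂₂, Matrix.add_apply,
        Matrix.smul_apply, Matrix.map_apply, OmegaM_diag, smul_eq_mul]
    rw [hE] at hq
    rw [show ((V (Sum.inr i) (Sum.inr i) : ℂ) - (1 - 1/(((k+2:ℕ)):ℂ)) * (D k i i : ℂ))
        = ((V (Sum.inr i) (Sum.inr i) - (1 - 1/((k:ℝ)+2)) * D k i i : ℝ) : ℂ) by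
      push_cast; ring] at hq
    have hq' := Complex.zero_le_real.mp hq
    have hVB : V (Sum.inr i) (Sum.inr i) ≤ B := by
      rw [hBdef]; exact Finset.le_sup' (fun i : Fin (2*nB) => V (Sum.inr i) (Sum.inr i)) (Finset.mem_univ i)
    have hk2 : (2:ℝ) ≤ (k:ℝ) + 2 := by
      have : (0:ℝ) ≤ (k:ℝ) := Nat.cast_nonneg k
      linarith
    have hk : 1/((k:ℝ)+2) ≤ 1/2 := one_div_le_one_div_of_le two_pos hk2
    nlinarith [mul_nonneg (by linarith : (0:ℝ) ≤ 1/2 - 1/((k:ℝ)+2)) (hdiag0 k i)]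
  -- all entries are bounded
  have key : ∀ k (i j : Fin (2*nB)), D k i j ∈ Set.Icc (-(2*B)) (2*B) := by
    intro k i j
    have h1 := hquad k i j 1
    have h2 := hquad k i j (-1)
    have hii := hdiagB k i
    have hjj := hdiagB k j
    have hii0 := hdiag0 k i
    have hjj0 := hdiag0 k j
    constructor <;> nlinarith
  -- compactness: extract a convergent subsequence
  have hKcomp : IsCompact (Set.univ.pi fun _ : Fin (2*nB) =>
      Set.univ.pi fun _ : Fin (2*nB) => Set.Icc (-(2*B)) (2*B)) :=
    isCompact_univ_pi fun _ => isCompact_univ_pi fun _ => isCompact_Icc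
  have hmem : ∀ k, (fun i j => D k i j) ∈ (Set.univ.pi fun _ : Fin (2*nB) =>
      Set.univ.pi fun _ : Fin (2*nB) => Set.Icc (-(2*B)) (2*B)) := by
    intro k
    rw [Set.mem_univ_pi]
    intro i
    rw [Set.mem_univ_pi]
    intro j
    exact key k i j
  obtain ⟨L, -, φ, hφ, hconv⟩ := hKcomp.tendsto_subseq hmem
  have hij : ∀ i j, Tendsto (fun k => D (φ k) i j) atTop (𝓝 (L i j)) := by
    intro i j
    have h1 := tendsto_pi_nhds.mp hconv i
    have h2 := tendsto_pi_nhds.mp h1 j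
    exact h2
  refine ⟨Matrix.of L, ?_, ?_, ?_⟩
  · refine Matrix.IsSymm.ext fun i j => ?_
    have t1 := hij i j
    have t2 : Tendsto (fun k => D (φ k) i j) atTop (𝓝 (L j i)) := by
      have := hij j i
      simpa [fun k => (hDsymm (φ k)).apply i j] using this
    exact tendsto_nhds_unique t2 t1
  · refine psd_limit (fun k => cplx (D (φ k)) - Complex.I • cplx (OmegaM nB)) _
      (fun k => hDpsd (φ k)) ?_
    intro i j
    simp only [cplx_sub_smul_entry, Matrix.of_apply]
    exact (Filter.Tendsto.ofReal (hij i j)).sub tendsto_const_nhds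
  · refine psd_limit (fun k => cplx V -
        Matrix.fromBlocks (Complex.I • cplx (OmegaM nA)) 0 0
          ((1 - 1/(((φ k+2:ℕ)):ℂ)) • cplx (D (φ k))
            + (Complex.I/(((φ k+2:ℕ)):ℂ)) • cplx (OmegaM nB))) _
      (fun k => hDext (φ k)) ?_
    have hc : Tendsto (fun k => 1/(((φ k + 2:ℕ)):ℂ)) atTop (𝓝 0) := by
      have hφ2 : Tendsto (fun k => φ k + 2) atTop atTop :=
        tendsto_atTop_mono (fun k => by
          simpa using le_trans hφ.le_apply (Nat.le_add_right (φ k) 2)) tendsto_id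
      have hr : Tendsto (fun n : ℕ => 1/((n:ℂ))) atTop (𝓝 0) := by
        have h1 := (Complex.continuous_ofReal.tendsto 0).comp tendsto_one_div_atTop_nhds_zero_nat
        have h2 : (Complex.ofReal ∘ fun n : ℕ => 1/(n:ℝ)) = fun n : ℕ => 1/((n:ℂ)) := by
          funext n; simp
        rwa [h2, Complex.ofReal_zero] at h1
      exact hr.comp hφ2
    rintro (a | a) (b | b)
    · have : ∀ k : ℕ, (cplx V -
          Matrix.fromBlocks (Complex.I • cplx (OmegaM nA)) 0 0
            ((1 - 1/(((φ k+2:ℕ)):ℂ)) • cplx (D (φ k))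
              + (Complex.I/(((φ k+2:ℕ)):ℂ)) • cplx (OmegaM nB))) (Sum.inl a) (Sum.inl b)
          = (cplx V - Matrix.fromBlocks (Complex.I • cplx (OmegaM nA)) 0 0
              (cplx (Matrix.of L))) (Sum.inl a) (Sum.inl b) := by
        intro k
        simp [Matrix.sub_apply, Matrix.fromBlocks_apply₁₁]
      simp only [this]
      exact tendsto_const_nhds
    · have : ∀ k : ℕ, (cplx V -
          Matrix.fromBlocks (Complex.I • cplx (OmegaM nA)) 0 0
            ((1 - 1/(((φ k+2:ℕ)):ℂ)) • cplx (D (φ k))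
              + (Complex.I/(((φ k+2:ℕ)):ℂ)) • cplx (OmegaM nB))) (Sum.inl a) (Sum.inr b)
          = (cplx V - Matrix.fromBlocks (Complex.I • cplx (OmegaM nA)) 0 0
              (cplx (Matrix.of L))) (Sum.inl a) (Sum.inr b) := by
        intro k
        simp [Matrix.sub_apply, Matrix.fromBlocks_apply₁₂]
      simp only [this]
      exact tendsto_const_nhds
    · have : ∀ k : ℕ, (cplx V -
          Matrix.fromBlocks (Complex.I • cplx (OmegaM nA)) 0 0
            ((1 - 1/(((φ k+2:ℕ)):ℂ)) • cplx (D (φ k))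
              + (Complex.I/(((φ k+2:ℕ)):ℂ)) • cplx (OmegaM nB))) (Sum.inr a) (Sum.inl b)
          = (cplx V - Matrix.fromBlocks (Complex.I • cplx (OmegaM nA)) 0 0
              (cplx (Matrix.of L))) (Sum.inr a) (Sum.inl b) := by
        intro k
        simp [Matrix.sub_apply, Matrix.fromBlocks_apply₂₁]
      simp only [this]
      exact tendsto_const_nhds
    · have hent : ∀ k : ℕ, (cplx V -
          Matrix.fromBlocks (Complex.I • cplx (OmegaM nA)) 0 0
            ((1 - 1/(((φ k+2:ℕ)):ℂ)) • cplx (D (φ k))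
              + (Complex.I/(((φ k+2:ℕ)):ℂ)) • cplx (OmegaM nB))) (Sum.inr a) (Sum.inr b)
          = (V (Sum.inr a) (Sum.inr b) : ℂ)
            - ((1 - 1/(((φ k+2:ℕ)):ℂ)) * (D (φ k) a b : ℂ)
              + Complex.I * (1/(((φ k+2:ℕ)):ℂ)) * (OmegaM nB a b : ℂ)) := by
        intro k
        simp only [cplx, Matrix.sub_apply, Matrix.fromBlocks_apply₂₂, Matrix.add_apply,
          Matrix.smul_apply, Matrix.map_apply, smul_eq_mul]
        ring
      have htgt : (cplx V - Matrix.fromBlocks (Complex.I • cplx (OmegaM nA)) 0 0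
            (cplx (Matrix.of L))) (Sum.inr a) (Sum.inr b)
          = (V (Sum.inr a) (Sum.inr b) : ℂ)
            - ((1 - 0) * (L a b : ℂ) + Complex.I * 0 * (OmegaM nB a b : ℂ)) := by
        simp [cplx, Matrix.sub_apply, Matrix.fromBlocks_apply₂₂, Matrix.map_apply]
      simp only [hent, htgt]
      refine Filter.Tendsto.sub tendsto_const_nhds ?_
      refine Filter.Tendsto.add ?_ ?_
      · exact (tendsto_const_nhds.sub hc).mul (Filter.Tendsto.ofReal (hij a b))
      · exact (tendsto_const_nhds.mul hc).mul tendsto_const_nhds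
end
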